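/- Let Δ=(D,W) be an NMU default theory, let l be a literal and let E be an extension of Δ with signature set liter(E). Then l ∈ liter(E) if and only if there is a proof of l w.r.t. Δ and liter(E). -/

import Mathlib

/-! Propositional formulas -/

inductive Form (V : Type) : Type
  | atom : V → Form V
  | tru  : Form V
  | fals : Form V
  | neg  : Form V → Form V
  | conj : Form V → Form V → Form V
  | disj : Form V → Form V → Form V

/-- Satisfaction of a formula by a valuation. -/
def Form.sat {V : Type} (v : V → Prop) : Form V → Prop
  | .atom a => v a
  | .tru => True
  | .fals => False
  | .neg φ => ¬ Form.sat v φ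
  | .conj φ ψ => Form.sat v φ ∧ Form.sat v ψ
  | .disj φ ψ => Form.sat v φ ∨ Form.sat v ψ

/-- Logical logClosure `T*` of a set of formulas. -/
def logClosure {V : Type} (T : Set (Form V)) : Set (Form V) :=
  { φ | ∀ v : V → Prop, (∀ ψ ∈ T, Form.sat v ψ) → Form.sat v φ }

/-- A default rule `α : β₁,…,β_m / γ` (`pre = none` means the prerequisite is missing). -/
structure Default (V : Type) : Type where
  pre   : Option (Form V)
  justs : List (Form V)
  concl : Form V

/-- The stage sets `E_i` relative to a candidate extension `E`:
`E_0 = W`, `E_{i+1} = E_i* ∪ {γ | α:β₁,…,β_m/γ ∈ D, α ∈ E_i, ¬β₁ ∉ E, …, ¬β_m ∉ E}`. -/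
def extStage {V : Type} (D : Set (Default V)) (W : Set (Form V)) (E : Set (Form V)) :
    ℕ → Set (Form V)
  | 0 => W
  | i + 1 =>
      logClosure (extStage D W E i) ∪
        { φ | ∃ d ∈ D, d.concl = φ ∧ (∀ a ∈ d.pre, a ∈ extStage D W E i) ∧
              ∀ b ∈ d.justs, Form.neg b ∉ E }

/-- `E` is an extension of the default theory `(D, W)`. -/
def IsExtension {V : Type} (D : Set (Default V)) (W : Set (Form V)) (E : Set (Form V)) : Prop :=
  E = ⋃ i, extStage D W E i

/-- `(D, W) ⊨ φ`: every extension of `(D, W)` contains `φ`. -/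
def entails {V : Type} (D : Set (Default V)) (W : Set (Form V)) (φ : Form V) : Prop :=
  ∀ E, IsExtension D W E → φ ∈ E

/-! Literals -/

/-- A literal: a letter together with a sign (`pos = true` means a positive literal). -/
structure Lit (V : Type) : Type where
  letter : V
  pos : Bool

/-- The formula corresponding to a literal. -/
def Lit.toForm {V : Type} (l : Lit V) : Form V :=
  if l.pos then Form.atom l.letter else Form.neg (Form.atom l.letter)

/-- Negation of a literal (so that `¬¬a = a`). -/
def Lit.negate {V : Type} (l : Lit V) : Lit V := ⟨l.letter, !l.pos⟩

/-- A set of literals is consistent if it contains no complementary pair. -/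
def LitConsistent {V : Type} (S : Set (Lit V)) : Prop := ∀ l ∈ S, l.negate ∉ S

/-! Normal mixed unary (NMU) default theories -/

/-- An NMU default `α : β / β` with `α` empty or a single literal and `β` a single literal. -/
structure NMUDefault (V : Type) : Type where
  pre : Option (Lit V)
  concl : Lit V

/-- The general default rule corresponding to an NMU default. -/
def NMUDefault.toDefault {V : Type} (d : NMUDefault V) : Default V :=
  ⟨d.pre.map Lit.toForm, [d.concl.toForm], d.concl.toForm⟩

/-- `E` is an extension of the NMU theory `(D, W)`. -/
def NMU.IsExtension {V : Type} (D : Set (NMUDefault V)) (W : Set (Lit V))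
    (E : Set (Form V)) : Prop :=
  _root_.IsExtension (NMUDefault.toDefault '' D) (Lit.toForm '' W) E

/-- The NMU theory `(D, W)` entails the literal `l`. -/
def NMU.entails {V : Type} (D : Set (NMUDefault V)) (W : Set (Lit V)) (l : Lit V) : Prop :=
  _root_.entails (NMUDefault.toDefault '' D) (Lit.toForm '' W) l.toForm

/-- An NMU theory is normal unary (NU) if every nonempty prerequisite is positive. -/
def IsNU {V : Type} (D : Set (NMUDefault V)) : Prop :=
  ∀ d ∈ D, ∀ p ∈ d.pre, p.pos = true

/-! Atomic dependency graph -/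

/-- Edge `(x, y)` of the atomic dependency graph: `x` occurs in the prerequisite and `y`
in the consequent of some default of `D`. -/
def depEdge {V : Type} (D : Set (NMUDefault V)) (x y : V) : Prop :=
  ∃ d ∈ D, (∃ p ∈ d.pre, p.letter = x) ∧ d.concl.letter = y

/-- There is a path from `x` to `y` in the atomic dependency graph. -/
def depReach {V : Type} (D : Set (NMUDefault V)) : V → V → Prop :=
  Relation.ReflTransGen (depEdge D)

/-- A set of literals `S` influences a literal `l`. -/
def influences {V : Type} (D : Set (NMUDefault V)) (S : Set (Lit V)) (l : Lit V) : Prop :=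
  ∃ t ∈ S, depReach D t.letter l.letter

/-- The Kautz–Selman conditions on a generating sequence `seq` of defaults of the NMU theory
`(D, W)` together with its stage sets `Es`: `E₀ = W`, `Eᵢ = E_{i-1} ∪ concl(δᵢ)`,
`pre(δᵢ) ⊆ E_{i-1}`, no justification of a `δᵢ` is negated in `Eₙ`, and no further default
of `D` is applicable to `Eₙ`. -/
def KSConditions {V : Type} (D : Set (NMUDefault V)) (W : Set (Lit V))
    (seq : List (NMUDefault V)) (Es : ℕ → Set (Lit V)) : Prop :=
  (∀ d ∈ seq, d ∈ D) ∧ Es 0 = W ∧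
  (∀ i (h : i < seq.length), Es (i + 1) = Es i ∪ {(seq.get ⟨i, h⟩).concl}) ∧
  (∀ i (h : i < seq.length), ∀ p ∈ (seq.get ⟨i, h⟩).pre, p ∈ Es i) ∧
  (∀ i (h : i < seq.length), ((seq.get ⟨i, h⟩).concl).negate ∉ Es seq.length) ∧
  (¬ ∃ d ∈ D, (∀ p ∈ d.pre, p ∈ Es seq.length) ∧ d.concl ∉ Es seq.length ∧
      d.concl.negate ∉ Es seq.length)

/-- `En` is the signature set of an extension of the NMU theory `(D, W)` (the extension
itself being the logical closure of `En`). -/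
def IsSignatureSet {V : Type} (D : Set (NMUDefault V)) (W : Set (Lit V))
    (En : Set (Lit V)) : Prop :=
  ∃ seq Es, KSConditions D W seq Es ∧ En = Es seq.length

/-- `seq = δ₁, …, δₙ` is a proof of the literal `l` w.r.t. the NMU theory `(D, W)` and the
set of literals `E`: the defaults are from `D`, `l` is the consequent of `δₙ`, `¬l ∉ E`,
and each `δᵢ` is prerequisite-free, or its prerequisite is in `W`, or `δ₁, …, δ_{i-1}` is
a proof of its prerequisite. -/
def IsProofList {V : Type} (D : Set (NMUDefault V)) (W E : Set (Lit V))
    (seq : List (NMUDefault V)) (l : Lit V) : Prop :=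
  (∀ d ∈ seq, d ∈ D) ∧
  (∃ h : seq ≠ [], (seq.getLast h).concl = l) ∧
  l.negate ∉ E ∧
  ∀ i, (h : i < seq.length) → ∀ p ∈ (seq.get ⟨i, h⟩).pre,
    p ∈ W ∨ IsProofList D W E (seq.take i) p
termination_by seq.length
decreasing_by simp [List.length_take]; omega

/-- There is a proof of `l` w.r.t. `(D, W)` and `E`: either `l` by itself, if `l ∈ W`,
or a sequence of defaults forming a proof of `l`. -/
def HasProof {V : Type} (D : Set (NMUDefault V)) (W E : Set (Lit V)) (l : Lit V) : Prop :=
  l ∈ W ∨ ∃ seq, IsProofList D W E seq l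

/-! Auxiliary lemmas -/

theorem isProofList_iff {V : Type} (D : Set (NMUDefault V)) (W E : Set (Lit V))
    (seq : List (NMUDefault V)) (l : Lit V) :
    IsProofList D W E seq l ↔
    ((∀ d ∈ seq, d ∈ D) ∧
    (∃ h : seq ≠ [], (seq.getLast h).concl = l) ∧
    l.negate ∉ E ∧
    ∀ i, (h : i < seq.length) → ∀ p ∈ (seq.get ⟨i, h⟩).pre,
      p ∈ W ∨ IsProofList D W E (seq.take i) p) := by
  rw [IsProofList]

/-- A single default with prerequisite (if any) in `W` is a proof of its consequent. -/
theorem proofList_single {V : Type} {D : Set (NMUDefault V)} {W E : Set (Lit V)}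
    {d : NMUDefault V} (hd : d ∈ D) (hneg : d.concl.negate ∉ E)
    (hpre : ∀ p ∈ d.pre, p ∈ W) :
    IsProofList D W E [d] d.concl := by
  rw [isProofList_iff]
  refine ⟨by simp [hd], ⟨by simp, by simp⟩, hneg, ?_⟩
  intro i h p hp
  have hi : i = 0 := Nat.lt_one_iff.1 (by simpa using h)
  subst hi
  exact Or.inl (hpre p hp)

/-- Extending a proof of the prerequisite by one default. -/
theorem proofList_append {V : Type} {D : Set (NMUDefault V)} {W E : Set (Lit V)}
    {d : NMUDefault V} {c : List (NMUDefault V)} {q : Lit V}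
    (hd : d ∈ D) (hneg : d.concl.negate ∉ E) (hpre : d.pre = some q)
    (hc : IsProofList D W E c q) :
    IsProofList D W E (c ++ [d]) d.concl := by
  rw [isProofList_iff] at *
  obtain ⟨hcD, hlast, hqneg, hsteps⟩ := hc
  refine ⟨?_, ⟨by simp, by simp⟩, hneg, ?_⟩
  · intro e he
    rcases List.mem_append.1 he with h | h
    · exact hcD e h
    · simp at h; subst h; exact hd
  · intro i h p hp
    rcases lt_or_eq_of_le (Nat.lt_succ_iff.1 (by simpa using h)) with hi | hi
    · have := hsteps i hi p (by
        have : (c ++ [d]).get ⟨i, h⟩ = c.get ⟨i, hi⟩ := by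
          simp [List.get_eq_getElem, List.getElem_append_left hi]
        rwa [this] at hp)
      rcases this with h1 | h1
      · exact Or.inl h1
      · right
        rwa [List.take_append_of_le_length (le_of_lt hi)]
    · have hgd : (c ++ [d]).get ⟨i, h⟩ = d := by
        subst hi
        simp [List.get_eq_getElem]
      rw [hgd, hpre] at hp
      simp at hp
      subst hp
      right
      rw [hi, List.take_append_of_le_length le_rfl, List.take_length]
      rw [isProofList_iff]
      exact ⟨hcD, hlast, hqneg, hsteps⟩

/-- Stages are monotone up to the length of the generating sequence. -/
theorem stage_mono {V : Type} {D : Set (NMUDefault V)} {W : Set (Lit V)}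
    {seq : List (NMUDefault V)} {Es : ℕ → Set (Lit V)}
    (hKS : KSConditions D W seq Es) {i j : ℕ} (hij : i ≤ j) (hj : j ≤ seq.length) :
    Es i ⊆ Es j := by
  obtain ⟨_, _, hstep, _⟩ := hKS
  induction j with
  | zero => simp_all
  | succ k ih =>
    rcases Nat.lt_succ_iff_lt_or_eq.1 (Nat.lt_succ_of_le hij) with h | h
    · have hk : k < seq.length := hj
      calc Es i ⊆ Es k := ih (Nat.lt_succ_iff.1 h) (le_of_lt hk)
        _ ⊆ Es (k + 1) := by rw [hstep k hk]; exact Set.subset_union_left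
    · exact h ▸ le_rfl

/-- Every literal in a stage is in `W` or the consequent of an earlier generating default. -/
theorem mem_stage_cases {V : Type} {D : Set (NMUDefault V)} {W : Set (Lit V)}
    {seq : List (NMUDefault V)} {Es : ℕ → Set (Lit V)}
    (hKS : KSConditions D W seq Es) :
    ∀ k, k ≤ seq.length → ∀ p ∈ Es k,
      p ∈ W ∨ ∃ m, ∃ hm : m < seq.length, m < k ∧ (seq.get ⟨m, hm⟩).concl = p := by
  obtain ⟨_, h0, hstep, _⟩ := hKS
  intro k
  induction k with
  | zero => intro _ p hp; exact Or.inl (h0 ▸ hp)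
  | succ j ih =>
    intro hk p hp
    have hj : j < seq.length := hk
    rw [hstep j hj] at hp
    rcases hp with hp | hp
    · rcases ih (le_of_lt hj) p hp with h | ⟨m, hm, hmk, hc⟩
      · exact Or.inl h
      · exact Or.inr ⟨m, hm, Nat.lt_succ_of_lt hmk, hc⟩
    · exact Or.inr ⟨j, hj, Nat.lt_succ_self j, hp.symm⟩

/-- Every consequent of a generating default has a proof. -/
theorem chain_proof {V : Type} {D : Set (NMUDefault V)} {W : Set (Lit V)}
    {seq : List (NMUDefault V)} {Es : ℕ → Set (Lit V)}
    (hKS : KSConditions D W seq Es) :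
    ∀ k, (hk : k < seq.length) →
      ∃ c, IsProofList D W (Es seq.length) c ((seq.get ⟨k, hk⟩).concl) := by
  intro k
  induction k using Nat.strong_induction_on with
  | _ k ih =>
    intro hk
    have hKS' := hKS
    obtain ⟨hseqD, h0, hstep, hpre, hneg, hmax⟩ := hKS'
    have hdD : seq.get ⟨k, hk⟩ ∈ D := hseqD _ (seq.get_mem ⟨k, hk⟩)
    have hdneg := hneg k hk
    rcases hq : (seq.get ⟨k, hk⟩).pre with _ | q
    · exact ⟨_, proofList_single hdD hdneg (fun p hp => absurd (hq ▸ hp) (by simp))⟩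
    · have hqk : q ∈ Es k := hpre k hk q (Option.mem_def.2 hq)
      rcases mem_stage_cases hKS k (le_of_lt hk) q hqk with hW | ⟨m, hm, hmk, hc⟩
      · refine ⟨_, proofList_single hdD hdneg (fun p hp => ?_)⟩
        rw [hq] at hp
        exact (Option.mem_some_iff.1 hp) ▸ hW
      · obtain ⟨c, hcp⟩ := ih m hmk hm
        rw [hc] at hcp
        exact ⟨c ++ _, proofList_append hdD hdneg hq hcp⟩

/-- Soundness of proofs: the conclusion of a proof belongs to the signature set. -/
theorem proof_sound {V : Type} {D : Set (NMUDefault V)} {W : Set (Lit V)}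
    {seq : List (NMUDefault V)} {Es : ℕ → Set (Lit V)}
    (hKS : KSConditions D W seq Es) :
    ∀ c l, IsProofList D W (Es seq.length) c l → l ∈ Es seq.length := by
  have hWE : W ⊆ Es seq.length := by
    have := stage_mono hKS (Nat.zero_le seq.length) le_rfl
    rwa [hKS.2.1] at this
  suffices h : ∀ n, ∀ c : List (NMUDefault V), c.length ≤ n → ∀ l,
      IsProofList D W (Es seq.length) c l → l ∈ Es seq.length by
    intro c l hc
    exact h c.length c le_rfl l hc
  intro n
  induction n with
  | zero =>
    intro c hc l hl
    rw [isProofList_iff] at hl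
    obtain ⟨_, ⟨hne, _⟩, _, _⟩ := hl
    exact absurd (List.length_eq_zero_iff.1 (Nat.le_zero.1 hc)) hne
  | succ n ih =>
    intro c hc l hl
    rw [isProofList_iff] at hl
    obtain ⟨hcD, ⟨hne, hlast⟩, hlneg, hsteps⟩ := hl
    have hlen : 0 < c.length := List.length_pos_iff.2 hne
    have hi : c.length - 1 < c.length := by omega
    have hlast' : c.get ⟨c.length - 1, hi⟩ = c.getLast hne := by
      rw [List.getLast_eq_getElem]; rfl
    have hpreEn : ∀ p ∈ (c.get ⟨c.length - 1, hi⟩).pre, p ∈ Es seq.length := by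
      intro p hp
      rcases hsteps _ hi p hp with h | h
      · exact hWE h
      · exact ih (c.take (c.length - 1)) (by simp [List.length_take]; omega) p h
    by_contra hlEn
    exact hKS.2.2.2.2.2 ⟨c.get ⟨c.length - 1, hi⟩, hcD _ (c.get_mem ⟨c.length - 1, hi⟩), hpreEn,
      by rw [hlast', hlast]; exact hlEn, by rw [hlast', hlast]; exact hlneg⟩

theorem in_signature_iff_proof {V : Type} (D : Set (NMUDefault V)) (W : Set (Lit V))
    (hD : D.Finite) (hW : W.Finite) (En : Set (Lit V))
    (hsig : IsSignatureSet D W En) (l : Lit V) :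
    l ∈ En ↔ HasProof D W En l := by
  obtain ⟨seq, Es, hKS, hEn⟩ := hsig
  subst hEn
  constructor
  · intro hl
    rcases mem_stage_cases hKS seq.length le_rfl l hl with hW' | ⟨m, hm, _, hc⟩
    · exact Or.inl hW'
    · obtain ⟨c, hcp⟩ := chain_proof hKS m hm
      exact Or.inr ⟨c, hc ▸ hcp⟩
  · rintro (hW' | ⟨c, hc⟩)
    · have := stage_mono hKS (Nat.zero_le seq.length) le_rfl
      rw [hKS.2.1] at this
      exact this hW'
    · exact proof_sound hKS c l hc
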